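/- Let r, a ≥ 0 be natural numbers and b < 0 an integer with a + br ≥ 0. Let α : ℂ[x₁,…,x₆] → ℂ[y₁^{±1}, y₂^{±1}, y₃^{±1}] be the ℂ-algebra homomorphism determined by α(x₁) = y₁, α(x₂) = y₁, α(x₃) = y₁^{−r}y₂, α(x₄) = y₂, α(x₅) = y₁^{−a}y₂^{−b}y₃, α(x₆) = y₃. Then the kernel of α equals the ideal generated by the three binomials x₁ − x₂, x₂^r x₃ − x₄, and x₂^{a+br} x₅ − x₃^{−b} x₆. -/

import Mathlib

open MvPolynomial

/-- The Laurent monomial `y₁^{v 0} y₂^{v 1} y₃^{v 2}` in the Laurent polynomial ring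
`ℂ[y₁^{±1}, y₂^{±1}, y₃^{±1}]`, realized as `AddMonoidAlgebra ℂ (Fin 3 → ℤ)`. -/
noncomputable def laurentMonomial3 (v : Fin 3 → ℤ) : AddMonoidAlgebra ℂ (Fin 3 → ℤ) :=
  AddMonoidAlgebra.single v 1

namespace Toric302
variable (r a : ℕ) (b : ℤ)

def vmat : Fin 6 → Fin 3 → ℤ :=
  ![![1, 0, 0], ![1, 0, 0], ![-(r : ℤ), 1, 0], ![0, 1, 0], ![-(a : ℤ), -b, 1], ![0, 0, 1]]

lemma vmat0 : vmat r a b 0 = ![1, 0, 0] := rfl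
lemma vmat1 : vmat r a b 1 = ![1, 0, 0] := rfl
lemma vmat2 : vmat r a b 2 = ![-(r : ℤ), 1, 0] := rfl
lemma vmat3 : vmat r a b 3 = ![0, 1, 0] := rfl
lemma vmat4 : vmat r a b 4 = ![-(a : ℤ), -b, 1] := rfl
lemma vmat5 : vmat r a b 5 = ![0, 0, 1] := rfl

def piz (u : Fin 6 → ℕ) : Fin 3 → ℤ := ∑ i : Fin 6, (u i : ℤ) • vmat r a b i

lemma piz_0 (u : Fin 6 → ℕ) :
    piz r a b u 0 = (u 0 : ℤ) + u 1 - r * u 2 - a * u 4 := by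
  simp [piz, Fin.sum_univ_six, vmat0, vmat1, vmat2, vmat3, vmat4, vmat5]; ring

lemma piz_1 (u : Fin 6 → ℕ) :
    piz r a b u 1 = (u 2 : ℤ) + u 3 - b * u 4 := by
  simp [piz, Fin.sum_univ_six, vmat0, vmat1, vmat2, vmat3, vmat4, vmat5]; ring

lemma piz_2 (u : Fin 6 → ℕ) :
    piz r a b u 2 = (u 4 : ℤ) + u 5 := by
  simp [piz, Fin.sum_univ_six, vmat0, vmat1, vmat2, vmat3, vmat4, vmat5]

lemma aeval_monomial_eq (u : Fin 6 →₀ ℕ) (c : ℂ) :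
    (MvPolynomial.aeval (fun i => laurentMonomial3 (vmat r a b i)))
      (monomial u c) = AddMonoidAlgebra.single (piz r a b u) c := by
  rw [aeval_monomial]
  rw [Finsupp.prod_fintype _ _ (fun i => pow_zero _)]
  have h1 : ∀ i : Fin 6, laurentMonomial3 (vmat r a b i) ^ u i
      = AddMonoidAlgebra.single ((u i : ℤ) • vmat r a b i) (1 : ℂ) := by
    intro i
    rw [laurentMonomial3, AddMonoidAlgebra.single_pow, one_pow, natCast_zsmul]
  simp_rw [h1]
  rw [AddMonoidAlgebra.prod_single, Finset.prod_const_one]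
  rw [show (algebraMap ℂ (AddMonoidAlgebra ℂ (Fin 3 → ℤ))) c
    = AddMonoidAlgebra.single 0 c from rfl]
  rw [AddMonoidAlgebra.single_mul_single, zero_add, mul_one, piz]

def sN : ℕ := ((a : ℤ) + b * r).toNat
def qN : ℕ := (-b).toNat

lemma sN_cast (hab : 0 ≤ (a : ℤ) + b * r) : (sN r a b : ℤ) = (a : ℤ) + b * r :=
  Int.toNat_of_nonneg hab

lemma qN_cast (hb : b < 0) : (qN b : ℤ) = -b := Int.toNat_of_nonneg (by omega)

def c2 (u : Fin 6 → ℕ) : ℕ := u 0 + u 1 + r * u 3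
def c3 (u : Fin 6 → ℕ) : ℕ := u 2 + u 3
def kk (u : Fin 6 → ℕ) : ℕ := if sN r a b = 0 then u 4 else min (u 4) (c2 r u / sN r a b)

def Nf (u : Fin 6 → ℕ) : Fin 6 → ℕ :=
  ![0, c2 r u - kk r a b u * sN r a b, c3 u + kk r a b u * qN b, 0,
    u 4 - kk r a b u, u 5 + kk r a b u]

lemma Nf_0 (u : Fin 6 → ℕ) : Nf r a b u 0 = 0 := rfl
lemma Nf_1 (u : Fin 6 → ℕ) : Nf r a b u 1 = c2 r u - kk r a b u * sN r a b := rfl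
lemma Nf_2 (u : Fin 6 → ℕ) : Nf r a b u 2 = c3 u + kk r a b u * qN b := rfl
lemma Nf_3 (u : Fin 6 → ℕ) : Nf r a b u 3 = 0 := rfl
lemma Nf_4 (u : Fin 6 → ℕ) : Nf r a b u 4 = u 4 - kk r a b u := rfl
lemma Nf_5 (u : Fin 6 → ℕ) : Nf r a b u 5 = u 5 + kk r a b u := rfl

lemma kk_le (u : Fin 6 → ℕ) : kk r a b u ≤ u 4 := by
  unfold kk; split
  · exact le_rfl
  · exact min_le_left _ _

lemma kk_mul_le (u : Fin 6 → ℕ) : kk r a b u * sN r a b ≤ c2 r u := by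
  unfold kk; split
  · simp [*]
  · calc (min (u 4) (c2 r u / sN r a b)) * sN r a b
        ≤ (c2 r u / sN r a b) * sN r a b := Nat.mul_le_mul_right _ (min_le_right _ _)
      _ ≤ c2 r u := Nat.div_mul_le_self _ _

def Normal (n : Fin 6 → ℕ) : Prop :=
  n 0 = 0 ∧ n 3 = 0 ∧ (n 4 = 0 ∨ (sN r a b ≠ 0 ∧ n 1 < sN r a b))

lemma Nf_normal (u : Fin 6 → ℕ) : Normal r a b (Nf r a b u) := by
  refine ⟨rfl, rfl, ?_⟩
  rw [Nf_4, Nf_1]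
  unfold kk
  split
  · left; simp
  · rename_i hs
    rcases le_total (u 4) (c2 r u / sN r a b) with h | h
    · left
      rw [min_eq_left h]
      omega
    · right
      refine ⟨hs, ?_⟩
      rw [min_eq_right h]
      have h1 : c2 r u - (c2 r u / sN r a b) * sN r a b = c2 r u % sN r a b := by
        have := Nat.mod_add_div' (c2 r u) (sN r a b); omega
      rw [h1]
      exact Nat.mod_lt _ (Nat.pos_of_ne_zero hs)

lemma piz_Nf (hb : b < 0) (hab : 0 ≤ (a : ℤ) + b * r) (u : Fin 6 → ℕ) :
    piz r a b (Nf r a b u) = piz r a b u := by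
  have hk4 := kk_le r a b u
  have hk2 := kk_mul_le r a b u
  have hs := sN_cast r a b hab
  have hq := qN_cast b hb
  have k0 : piz r a b (Nf r a b u) 0 = piz r a b u 0 := by
    rw [piz_0, piz_0, Nf_0, Nf_1, Nf_2, Nf_4,
      Nat.cast_sub hk2, Nat.cast_sub hk4]
    push_cast
    rw [hs, hq]
    unfold c2 c3
    push_cast
    ring
  have k1 : piz r a b (Nf r a b u) 1 = piz r a b u 1 := by
    rw [piz_1, piz_1, Nf_2, Nf_3, Nf_4, Nat.cast_sub hk4]
    push_cast
    rw [hq]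
    unfold c3
    push_cast
    ring
  have k2 : piz r a b (Nf r a b u) 2 = piz r a b u 2 := by
    rw [piz_2, piz_2, Nf_4, Nf_5, Nat.cast_sub hk4]
    push_cast
    ring
  funext j
  fin_cases j
  · exact k0
  · exact k1
  · exact k2

lemma normal_unique_aux (hb : b < 0) (hab : 0 ≤ (a : ℤ) + b * r)
    (n m : Fin 6 → ℕ) (hn : Normal r a b n) (hm : Normal r a b m)
    (hpi : piz r a b n = piz r a b m) (h4 : m 4 ≤ n 4) : n = m := by
  obtain ⟨hn0, hn3, hn4⟩ := hn
  obtain ⟨hm0, hm3, hm4⟩ := hm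
  have E0 : (n 0 : ℤ) + n 1 - r * n 2 - a * n 4 = (m 0 : ℤ) + m 1 - r * m 2 - a * m 4 := by
    rw [← piz_0, ← piz_0, hpi]
  have E1 : (n 2 : ℤ) + n 3 - b * n 4 = (m 2 : ℤ) + m 3 - b * m 4 := by
    rw [← piz_1, ← piz_1, hpi]
  have E2 : (n 4 : ℤ) + n 5 = (m 4 : ℤ) + m 5 := by
    rw [← piz_2, ← piz_2, hpi]
  simp only [hn0, hm0, hn3, hm3, Nat.cast_zero, zero_add, add_zero] at E0 E1
  have h44 : n 4 = m 4 := by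
    by_contra ht
    have h4' : m 4 < n 4 := lt_of_le_of_ne h4 (Ne.symm ht)
    have hn4' : n 4 ≠ 0 := by omega
    rcases hn4 with h | ⟨hsn, hn1⟩
    · exact hn4' h
    · have hm2 : (m 2 : ℤ) = n 2 + (-b) * ((n 4 : ℤ) - m 4) := by linear_combination -E1
      have hm1 : (m 1 : ℤ) = n 1 - ((a : ℤ) + b * r) * ((n 4 : ℤ) - m 4) := by
        linear_combination -E0 + (r : ℤ) * hm2
      have hs : (0 : ℤ) < (a : ℤ) + b * r := by
        have h1 : (0 : ℤ) < (sN r a b : ℤ) := by exact_mod_cast Nat.pos_of_ne_zero hsn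
        rwa [sN_cast r a b hab] at h1
      have ht1 : (1 : ℤ) ≤ (n 4 : ℤ) - m 4 := by
        have : (m 4 : ℤ) < n 4 := by exact_mod_cast h4'
        omega
      have hmul : ((a : ℤ) + b * r) ≤ ((a : ℤ) + b * r) * ((n 4 : ℤ) - m 4) :=
        le_mul_of_one_le_right (le_of_lt hs) ht1
      have hm1nn : (0 : ℤ) ≤ (m 1 : ℤ) := Nat.cast_nonneg _
      have hn1' : (n 1 : ℤ) < (a : ℤ) + b * r := by
        have h1 : (n 1 : ℤ) < ((sN r a b : ℕ) : ℤ) := by exact_mod_cast hn1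
        rwa [sN_cast r a b hab] at h1
      linarith
  have h22 : n 2 = m 2 := by
    have : (n 2 : ℤ) = m 2 := by rw [h44] at E1; linarith
    exact_mod_cast this
  have h11 : n 1 = m 1 := by
    have : (n 1 : ℤ) = m 1 := by
      rw [h44, h22] at E0; linarith
    exact_mod_cast this
  have h55 : n 5 = m 5 := by
    have : (n 5 : ℤ) = m 5 := by rw [h44] at E2; linarith
    exact_mod_cast this
  funext i
  fin_cases i
  · exact hn0.trans hm0.symm
  · exact h11
  · exact h22
  · exact hn3.trans hm3.symm
  · exact h44
  · exact h55

lemma normal_unique (hb : b < 0) (hab : 0 ≤ (a : ℤ) + b * r)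
    (n m : Fin 6 → ℕ) (hn : Normal r a b n) (hm : Normal r a b m)
    (hpi : piz r a b n = piz r a b m) : n = m := by
  rcases le_total (m 4) (n 4) with h | h
  · exact normal_unique_aux r a b hb hab n m hn hm hpi h
  · exact (normal_unique_aux r a b hb hab m n hm hn hpi.symm h).symm

noncomputable def gens : Set (MvPolynomial (Fin 6) ℂ) :=
  {(X 0 - X 1 : MvPolynomial (Fin 6) ℂ),
    X 1 ^ r * X 2 - X 3, X 1 ^ sN r a b * X 4 - X 2 ^ qN b * X 5}

noncomputable def Idl : Ideal (MvPolynomial (Fin 6) ℂ) := Ideal.span (gens r a b)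

lemma pow_move {Q : Type*} [CommRing Q] (A B E F : Q) (s q p t w z c : ℕ)
    (h : (A ^ s * E) ^ t = (B ^ q * F) ^ t) :
    A ^ (p + t * s) * B ^ c * E ^ (w + t) * F ^ z
      = A ^ p * B ^ (c + t * q) * E ^ w * F ^ (z + t) := by
  calc A ^ (p + t * s) * B ^ c * E ^ (w + t) * F ^ z
      = (A ^ p * B ^ c * E ^ w * F ^ z) * (A ^ s * E) ^ t := by ring
    _ = (A ^ p * B ^ c * E ^ w * F ^ z) * (B ^ q * F) ^ t := by rw [h]
    _ = A ^ p * B ^ (c + t * q) * E ^ w * F ^ (z + t) := by ring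

lemma mono_prod (u : Fin 6 → ℕ) :
    (monomial (Finsupp.equivFunOnFinite.symm u) (1 : ℂ) : MvPolynomial (Fin 6) ℂ)
      = ∏ i : Fin 6, X i ^ u i := by
  rw [monomial_eq, C_1, one_mul]
  rw [Finsupp.prod_fintype _ _ (fun i => pow_zero _)]
  congr 1

lemma mk_monomial_eq (u : Fin 6 → ℕ) :
    Ideal.Quotient.mk (Idl r a b) (monomial (Finsupp.equivFunOnFinite.symm u) 1)
      = Ideal.Quotient.mk (Idl r a b)
        (monomial (Finsupp.equivFunOnFinite.symm (Nf r a b u)) 1) := by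
  set φ := Ideal.Quotient.mk (Idl r a b) with hφ
  have hg1 : (X 0 - X 1 : MvPolynomial (Fin 6) ℂ) ∈ Idl r a b :=
    Ideal.subset_span (Set.mem_insert _ _)
  have hg2 : (X 1 ^ r * X 2 - X 3 : MvPolynomial (Fin 6) ℂ) ∈ Idl r a b :=
    Ideal.subset_span (Set.mem_insert_iff.mpr (Or.inr (Set.mem_insert _ _)))
  have hg3 : (X 1 ^ sN r a b * X 4 - X 2 ^ qN b * X 5 : MvPolynomial (Fin 6) ℂ)
      ∈ Idl r a b :=
    Ideal.subset_span (Set.mem_insert_iff.mpr (Or.inr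
      (Set.mem_insert_iff.mpr (Or.inr rfl))))
  have hrel1 : φ (X 0) = φ (X 1) := Ideal.Quotient.eq.mpr hg1
  have hrel2 : φ (X 3) = φ (X 1) ^ r * φ (X 2) := by
    have h := Ideal.Quotient.eq.mpr hg2
    rw [map_mul, map_pow] at h
    exact h.symm
  have hrel3 : φ (X 1) ^ sN r a b * φ (X 4) = φ (X 2) ^ qN b * φ (X 5) := by
    have h := Ideal.Quotient.eq.mpr hg3
    rwa [map_mul, map_pow, map_mul, map_pow] at h
  rw [mono_prod, mono_prod, map_prod, map_prod]
  simp only [map_pow, Fin.prod_univ_six]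
  rw [hrel1, hrel2, Nf_0, Nf_1, Nf_2, Nf_3, Nf_4, Nf_5, pow_zero, pow_zero,
    one_mul, mul_one]
  set A := φ (X 1)
  set B := φ (X 2)
  set E := φ (X 4)
  set F := φ (X 5)
  have hk4 := kk_le r a b u
  have hk2 := kk_mul_le r a b u
  set t := kk r a b u with htdef
  have hc2 : u 0 + u 1 + r * u 3 = (c2 r u - t * sN r a b) + t * sN r a b := by
    unfold c2 at *; omega
  have hu4 : u 4 = (u 4 - t) + t := by omega
  have hc3 : c3 u = u 2 + u 3 := rfl
  calc A ^ u 0 * A ^ u 1 * B ^ u 2 * (A ^ r * B) ^ u 3 * E ^ u 4 * F ^ u 5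
      = A ^ (u 0 + u 1 + r * u 3) * B ^ (u 2 + u 3) * E ^ u 4 * F ^ u 5 := by ring
    _ = A ^ ((c2 r u - t * sN r a b) + t * sN r a b) * B ^ (u 2 + u 3)
          * E ^ ((u 4 - t) + t) * F ^ u 5 := by rw [← hc2, ← hu4]
    _ = A ^ (c2 r u - t * sN r a b) * B ^ ((u 2 + u 3) + t * qN b)
          * E ^ (u 4 - t) * F ^ (u 5 + t) := by
        apply pow_move
        rw [hrel3]
    _ = A ^ (c2 r u - t * sN r a b) * B ^ (c3 u + t * qN b)
          * E ^ (u 4 - t) * F ^ (u 5 + t) := by rw [hc3]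

open Classical in
noncomputable def can (w : Fin 3 → ℤ) : Fin 6 →₀ ℕ :=
  if h : ∃ n : Fin 6 → ℕ, Normal r a b n ∧ piz r a b n = w then
    Finsupp.equivFunOnFinite.symm h.choose
  else 0

lemma can_piz (hb : b < 0) (hab : 0 ≤ (a : ℤ) + b * r) (u : Fin 6 → ℕ) :
    can r a b (piz r a b u) = Finsupp.equivFunOnFinite.symm (Nf r a b u) := by
  have hex : ∃ n : Fin 6 → ℕ, Normal r a b n ∧ piz r a b n = piz r a b u :=
    ⟨Nf r a b u, Nf_normal r a b u, piz_Nf r a b hb hab u⟩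
  rw [can, dif_pos hex]
  congr 1
  exact normal_unique r a b hb hab _ _ hex.choose_spec.1 (Nf_normal r a b u)
    (hex.choose_spec.2.trans (piz_Nf r a b hb hab u).symm)

noncomputable def Phi (f : AddMonoidAlgebra ℂ (Fin 3 → ℤ)) : MvPolynomial (Fin 6) ℂ :=
  f.coeff.sum fun w c => monomial (can r a b w) c

lemma Phi_single (w : Fin 3 → ℤ) (c : ℂ) :
    Phi r a b (AddMonoidAlgebra.single w c) = monomial (can r a b w) c :=
  Finsupp.sum_single_index (by simp)

lemma Phi_add (f g : AddMonoidAlgebra ℂ (Fin 3 → ℤ)) :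
    Phi r a b (f + g) = Phi r a b f + Phi r a b g :=
  Finsupp.sum_add_index' (fun w => by simp) (fun w c1 c2 => by
    rw [(monomial (can r a b w)).map_add])

lemma Phi_zero : Phi r a b 0 = 0 := Finsupp.sum_zero_index

lemma mk_eq_mk_Phi (hb : b < 0) (hab : 0 ≤ (a : ℤ) + b * r)
    (f : MvPolynomial (Fin 6) ℂ) :
    Ideal.Quotient.mk (Idl r a b) f
      = Ideal.Quotient.mk (Idl r a b)
        (Phi r a b ((MvPolynomial.aeval (fun i => laurentMonomial3 (vmat r a b i))) f)) := by
  induction f using MvPolynomial.induction_on' with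
  | monomial u c =>
      rw [aeval_monomial_eq, Phi_single, can_piz r a b hb hab]
      have husymm : Finsupp.equivFunOnFinite.symm (⇑u) = u :=
        Finsupp.equivFunOnFinite.symm_apply_apply u
      have h1 : (monomial u c : MvPolynomial (Fin 6) ℂ)
          = C c * monomial (Finsupp.equivFunOnFinite.symm (⇑u)) 1 := by
        rw [husymm, C_mul_monomial, mul_one]
      have h2 : (monomial (Finsupp.equivFunOnFinite.symm (Nf r a b ⇑u)) c
            : MvPolynomial (Fin 6) ℂ)
          = C c * monomial (Finsupp.equivFunOnFinite.symm (Nf r a b ⇑u)) 1 := by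
        rw [C_mul_monomial, mul_one]
      rw [h1, h2, map_mul, map_mul, mk_monomial_eq r a b ⇑u]
  | add p q hp hq =>
      rw [map_add, map_add, Phi_add, map_add, hp, hq]

end Toric302

theorem toric_ideal_case_3_0_2 (r a : ℕ) (b : ℤ) (hb : b < 0) (hab : 0 ≤ (a : ℤ) + b * r) :
    RingHom.ker (MvPolynomial.aeval
        ![laurentMonomial3 ![1, 0, 0], laurentMonomial3 ![1, 0, 0],
          laurentMonomial3 ![-(r : ℤ), 1, 0], laurentMonomial3 ![0, 1, 0],
          laurentMonomial3 ![-(a : ℤ), -b, 1], laurentMonomial3 ![0, 0, 1]] :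
      MvPolynomial (Fin 6) ℂ →ₐ[ℂ] AddMonoidAlgebra ℂ (Fin 3 → ℤ)) =
    Ideal.span {(X 0 - X 1 : MvPolynomial (Fin 6) ℂ),
      X 1 ^ r * X 2 - X 3, X 1 ^ ((a : ℤ) + b * r).toNat * X 4 - X 2 ^ (-b).toNat * X 5} := by
  classical
  have hfun : (![laurentMonomial3 ![1, 0, 0], laurentMonomial3 ![1, 0, 0],
          laurentMonomial3 ![-(r : ℤ), 1, 0], laurentMonomial3 ![0, 1, 0],
          laurentMonomial3 ![-(a : ℤ), -b, 1], laurentMonomial3 ![0, 0, 1]]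
        : Fin 6 → AddMonoidAlgebra ℂ (Fin 3 → ℤ))
      = fun i => laurentMonomial3 (Toric302.vmat r a b i) := by
    funext i
    fin_cases i <;> rfl
  rw [hfun]
  show RingHom.ker _ = Toric302.Idl r a b
  apply le_antisymm
  · -- ker ⊆ span
    intro f hf
    rw [RingHom.mem_ker] at hf
    have h := Toric302.mk_eq_mk_Phi r a b hb hab f
    rw [hf, Toric302.Phi_zero, map_zero] at h
    exact (Ideal.Quotient.eq_zero_iff_mem).mp h
  · -- span ⊆ ker
    rw [Toric302.Idl, Ideal.span_le]
    intro g hg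
    have hsv := Toric302.sN_cast r a b hab
    have hqv := Toric302.qN_cast b hb
    simp only [Toric302.gens, Set.mem_insert_iff, Set.mem_singleton_iff] at hg
    rcases hg with rfl | rfl | rfl
    · rw [SetLike.mem_coe, RingHom.mem_ker, map_sub, aeval_X, aeval_X]
      rw [Toric302.vmat0, Toric302.vmat1, sub_self]
    · rw [SetLike.mem_coe, RingHom.mem_ker, map_sub, map_mul, map_pow,
        aeval_X, aeval_X, aeval_X]
      simp only [laurentMonomial3, AddMonoidAlgebra.single_pow, one_pow,
        AddMonoidAlgebra.single_mul_single, one_mul]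
      rw [sub_eq_zero]
      congr 1
      funext j
      fin_cases j <;>
        simp [Toric302.vmat1, Toric302.vmat2, Toric302.vmat3]
    · rw [SetLike.mem_coe, RingHom.mem_ker, map_sub, map_mul, map_mul, map_pow,
        map_pow, aeval_X, aeval_X, aeval_X, aeval_X]
      simp only [laurentMonomial3, AddMonoidAlgebra.single_pow, one_pow,
        AddMonoidAlgebra.single_mul_single, one_mul]
      rw [sub_eq_zero]
      congr 1
      funext j
      fin_cases j <;>
        simp [Toric302.vmat1, Toric302.vmat2, Toric302.vmat4, Toric302.vmat5]
      · rw [hsv, hqv]; ring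
      · rw [hqv]
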